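/- Let X ⊂ ℤ_{≥0}^d be a finite set of nonzero nonnegative integer vectors. Then the function m_0 : Sg(X) → ℤ_{≥0} is eventually quasiconstant; that is, the function f : ℤ_{≥0}^d → ℤ_{≥0} defined by f(b) = m_0(b) for b ∈ Sg(X) and f(b) = 0 otherwise, can be written as a finite sum f = f_1 + ⋯ + f_k, where each f_i vanishes outside a translated cone C_i = b_i + Sg({v_{i,1}, …, v_{i,s_i}}) ⊂ ℤ_{≥0}^d (with b_i ∈ ℤ_{≥0}^d and v_{i,1}, …, v_{i,s_i} ∈ ℤ_{≥0}^d linearly independent) and is constant on C_i. -/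

import Mathlib

/-- The integer conic hull (semigroup) generated by nonnegative integer
vectors `x i`. -/
def SgNV {ι : Type*} [Fintype ι] {d : ℕ} (x : ι → Fin d → ℕ) : Set (Fin d → ℕ) :=
  { b | ∃ lam : ι → ℕ, ∑ i, lam i • x i = b }

/-- `m0NV x b` is the least number of nonzero coefficients in a representation
of `b` as a nonnegative integer combination of the `x i`. -/
noncomputable def m0NV {ι : Type*} [Fintype ι] {d : ℕ} (x : ι → Fin d → ℕ)
    (b : Fin d → ℕ) : ℕ :=
  sInf { k | ∃ lam : ι → ℕ, (∑ i, lam i • x i = b) ∧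
    k = (Finset.univ.filter fun i => lam i ≠ 0).card }

/-- The cone generated by `v 0, …, v (s-1)` translated by `b0`. -/
def TransCone {d s : ℕ} (b0 : Fin d → ℕ) (v : Fin s → Fin d → ℕ) :
    Set (Fin d → ℕ) :=
  { b | ∃ lam : Fin s → ℕ, b0 + ∑ l, lam l • v l = b }


noncomputable instance myLO (m : ℕ) : LinearOrder (Lex (Fin m → ℕ)) :=
  haveI h : WellFoundedLT (Fin m) := inferInstance
  @Pi.Lex.linearOrder (Fin m) (fun _ => ℕ) inferInstance h
    (fun _ => inferInstance)

/-- The linear map `ℕ^m → ℕ^d` given by the vectors `z`. -/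
def piMap {m d : ℕ} (z : Fin m → Fin d → ℕ) (lam : Fin m → ℕ) : Fin d → ℕ :=
  ∑ i, lam i • z i

lemma piMap_add {m d : ℕ} (z : Fin m → Fin d → ℕ) (a b : Fin m → ℕ) :
    piMap z (a + b) = piMap z a + piMap z b := by
  simp [piMap, add_smul, Finset.sum_add_distrib]

lemma piMap_sum {m d r : ℕ} (z : Fin m → Fin d → ℕ) (c : Fin r → ℕ) (h : Fin r → Fin m → ℕ) :
    piMap z (∑ j, c j • h j) = ∑ j, c j • piMap z (h j) := by
  simp only [piMap, Finset.sum_apply, Pi.smul_apply, Finset.sum_smul, smul_eq_mul, mul_smul]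
  rw [Finset.sum_comm]
  simp [Finset.smul_sum]

lemma mem_SgNV_iff {m d : ℕ} (z : Fin m → Fin d → ℕ) (b : Fin d → ℕ) :
    b ∈ SgNV z ↔ ∃ lam : Fin m → ℕ, piMap z lam = b := Iff.rfl

/-- reindexing a sum over a `Finset (Fin m)` through its order iso with `Fin S.card`. -/
lemma sum_reindex {M : Type*} [AddCommMonoid M] {m : ℕ} (S : Finset (Fin m)) (f : Fin m → M) :
    ∑ l : Fin S.card, f ((S.orderIsoOfFin rfl) l) = ∑ i ∈ S, f i := by
  rw [← Finset.sum_attach S f]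
  exact Fintype.sum_equiv (S.orderIsoOfFin rfl).toEquiv _ _ (fun l => rfl)

/-- extend a coefficient vector on `S` by zero. -/
def extFun {m : ℕ} (S : Finset (Fin m)) (c : Fin S.card → ℕ) : Fin m → ℕ :=
  fun i => if h : i ∈ S then c ((S.orderIsoOfFin rfl).symm ⟨i, h⟩) else 0

lemma extFun_apply_mem {m : ℕ} (S : Finset (Fin m)) (c : Fin S.card → ℕ) (l : Fin S.card) :
    extFun S c ((S.orderIsoOfFin rfl) l) = c l := by
  have h : ((S.orderIsoOfFin rfl) l : Fin m) ∈ S := ((S.orderIsoOfFin rfl) l).2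
  simp only [extFun, dif_pos h]
  congr 1
  rw [OrderIso.symm_apply_eq]

lemma extFun_apply_not_mem {m : ℕ} (S : Finset (Fin m)) (c : Fin S.card → ℕ) (i : Fin m)
    (h : i ∉ S) : extFun S c i = 0 := dif_neg h

lemma piMap_extFun {m d : ℕ} (z : Fin m → Fin d → ℕ) (S : Finset (Fin m))
    (c : Fin S.card → ℕ) :
    piMap z (extFun S c) = ∑ l : Fin S.card, c l • z ((S.orderIsoOfFin rfl) l) := by
  have h1 : ∑ l : Fin S.card, c l • z ((S.orderIsoOfFin rfl) l)
      = ∑ l : Fin S.card, (fun i => extFun S c i • z i) ((S.orderIsoOfFin rfl) l) := by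
    refine Finset.sum_congr rfl fun l _ => ?_
    dsimp only
    rw [extFun_apply_mem]
  rw [h1, sum_reindex S (fun i => extFun S c i • z i)]
  rw [piMap]
  symm
  apply Finset.sum_subset (Finset.subset_univ S)
  intro i _ hi
  rw [extFun_apply_not_mem S c i hi, zero_smul]
lemma fiber_finite {m d : ℕ} (z : Fin m → Fin d → ℕ) (hz : ∀ i, z i ≠ 0) (b : Fin d → ℕ) :
    {lam : Fin m → ℕ | piMap z lam = b}.Finite := by
  have hsub : {lam : Fin m → ℕ | piMap z lam = b} ⊆ Set.Iic (fun _ => ∑ j, b j) := by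
    intro lam hlam
    intro i
    obtain ⟨j0, hj0⟩ : ∃ j0, z i j0 ≠ 0 := by
      by_contra hc
      push_neg at hc
      exact hz i (funext hc)
    have h1 : lam i * z i j0 ≤ b j0 := by
      have h2 : ∑ i', lam i' * z i' j0 = b j0 := by
        have := congrFun hlam j0
        simpa [piMap, Finset.sum_apply] using this
      rw [← h2]
      exact Finset.single_le_sum (f := fun i' => lam i' * z i' j0) (fun i' _ => Nat.zero_le _) (Finset.mem_univ i)
    calc lam i ≤ lam i * z i j0 := Nat.le_mul_of_pos_right _ (Nat.pos_of_ne_zero hj0)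
      _ ≤ b j0 := h1
      _ ≤ ∑ j, b j := Finset.single_le_sum (fun j _ => Nat.zero_le _) (Finset.mem_univ j0)
  exact (Set.finite_Iic _).subset hsub

lemma lex_lt_add {m : ℕ} {a b : Fin m → ℕ} (c : Fin m → ℕ)
    (h : toLex a < toLex b) : toLex (a + c) < toLex (b + c) := by
  obtain ⟨i, hj, hi⟩ := h
  refine ⟨i, fun j hji => ?_, ?_⟩
  · show a j + c j = b j + c j
    have hab : a j = b j := hj j hji
    rw [hab]
  · show a i + c i < b i + c i
    exact Nat.add_lt_add_right hi (c i)

lemma le_exists_add {m : ℕ} {a b : Fin m → ℕ} (h : a ≤ b) : ∃ δ, b = a + δ :=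
  ⟨b - a, funext fun i => by
    have h2 : a i ≤ b i := h i
    show b i = a i + (b i - a i)
    omega⟩

/-- Every upward closed set in `ℕ^m` is generated by a finite set (Dickson). -/
lemma upset_fg {m : ℕ} (U : Set (Fin m → ℕ))
    (hU : ∀ a ∈ U, ∀ δ : Fin m → ℕ, a + δ ∈ U) :
    ∃ G : Finset (Fin m → ℕ), ∀ lam, lam ∈ U ↔ ∃ g ∈ G, g ≤ lam := by
  classical
  set Min : Set (Fin m → ℕ) := {a | a ∈ U ∧ ∀ b ∈ U, b ≤ a → b = a} with hMin
  have hanti : IsAntichain (· ≤ ·) Min := fun a ha b hb hne hab => hne (hb.2 a ha.1 hab)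
  have hfin : Min.Finite := by
    haveI hw : ∀ i : Fin m, IsWellOrder ℕ (· < ·) := fun _ => inferInstance
    exact hanti.finite_of_partiallyWellOrderedOn
      (Set.isPWO_of_wellQuasiOrderedLE Min)
  refine ⟨hfin.toFinset, fun lam => ⟨fun hlam => ?_, fun ⟨g, hg, hgle⟩ => ?_⟩⟩
  · set T : Set (Fin m → ℕ) := {b | b ∈ U ∧ b ≤ lam} with hT
    have hTfin : T.Finite := (Set.finite_Iic lam).subset (fun b hb => hb.2)
    obtain ⟨g, hgle, hgmin⟩ := hTfin.isPWO.exists_le_minimal (⟨hlam, le_refl lam⟩ : lam ∈ T)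
    refine ⟨g, ?_, hgle⟩
    rw [Set.Finite.mem_toFinset]
    refine ⟨hgmin.1.1, fun b hb hble => ?_⟩
    have hbT : b ∈ T := ⟨hb, le_trans hble hgle⟩
    exact le_antisymm hble (hgmin.2 hbT hble)
  · rw [Set.Finite.mem_toFinset] at hg
    obtain ⟨δ, hδ⟩ := le_exists_add hgle
    rw [hδ]
    exact hU g hg.1 δ
/-- A translated coordinate orthant in `ℕ^m`. -/
def Piece {m : ℕ} (a : Fin m → ℕ) (S : Finset (Fin m)) : Set (Fin m → ℕ) :=
  {lam | a ≤ lam ∧ ∀ j ∉ S, lam j = a j}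

lemma mem_piece_iff {m : ℕ} {a lam : Fin m → ℕ} {S : Finset (Fin m)} :
    lam ∈ Piece a S ↔ a ≤ lam ∧ ∀ j ∉ S, lam j = a j := Iff.rfl

/-- Stanley decomposition: the complement of the up-set generated by `G`
is a finite disjoint union of translated coordinate orthants. -/
lemma stanley : ∀ (m : ℕ) (G : Finset (Fin m → ℕ)),
    ∃ P : Finset ((Fin m → ℕ) × Finset (Fin m)),
      (∀ lam, (∀ g ∈ G, ¬ g ≤ lam) ↔ ∃ p ∈ P, lam ∈ Piece p.1 p.2) ∧
      (∀ p ∈ P, ∀ q ∈ P, ∀ lam, lam ∈ Piece p.1 p.2 → lam ∈ Piece q.1 q.2 → p = q) := by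
  intro m
  induction m with
  | zero =>
    intro G
    classical
    by_cases hG : G = ∅
    · refine ⟨{((fun _ => 0), ∅)}, fun lam => ?_, ?_⟩
      · subst hG
        simp only [Finset.notMem_empty, false_implies, implies_true, true_iff]
        refine ⟨((fun _ => 0), ∅), Finset.mem_singleton_self _, ?_, ?_⟩
        · intro i; exact i.elim0
        · intro j; exact j.elim0
      · intro p hp q hq lam _ _
        rw [Finset.mem_singleton] at hp hq
        rw [hp, hq]
    · obtain ⟨g, hg⟩ := Finset.nonempty_iff_ne_empty.2 hG
      refine ⟨∅, fun lam => ?_, ?_⟩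
      · constructor
        · intro h
          exact absurd (fun i => i.elim0 : g ≤ lam) (h g hg)
        · rintro ⟨p, hp, -⟩
          exact absurd hp (Finset.notMem_empty p)
      · intro p hp
        exact absurd hp (Finset.notMem_empty p)
  | succ m ih =>
    intro G
    classical
    set C := G.sup (fun g => g (Fin.last m)) with hC
    set Gc : ℕ → Finset (Fin m → ℕ) :=
      fun c => (G.filter (fun g => g (Fin.last m) ≤ c)).image Fin.init with hGc
    choose Pf hPf using fun c => ih (Gc c)
    set lift : ℕ → (Fin m → ℕ) × Finset (Fin m) → (Fin (m+1) → ℕ) × Finset (Fin (m+1)) :=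
      fun c p => (Fin.snoc p.1 c, p.2.image Fin.castSucc) with hlift
    set liftTop : (Fin m → ℕ) × Finset (Fin m) → (Fin (m+1) → ℕ) × Finset (Fin (m+1)) :=
      fun p => (Fin.snoc p.1 C, insert (Fin.last m) (p.2.image Fin.castSucc)) with hliftTop
    have factG : ∀ lam : Fin (m+1) → ℕ,
        (∃ g ∈ G, g ≤ lam) ↔
          ∃ g' ∈ Gc (min (lam (Fin.last m)) C), g' ≤ Fin.init lam := by
      intro lam
      constructor
      · rintro ⟨g, hgG, hgle⟩
        refine ⟨Fin.init g, ?_, fun i => hgle (Fin.castSucc i)⟩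
        rw [hGc]
        refine Finset.mem_image_of_mem _ ?_
        rw [Finset.mem_filter]
        exact ⟨hgG, le_min (hgle (Fin.last m)) (Finset.le_sup (f := fun g => g (Fin.last m)) hgG)⟩
      · rintro ⟨g', hg', hle⟩
        rw [hGc, Finset.mem_image] at hg'
        obtain ⟨g, hgmem, rfl⟩ := hg'
        rw [Finset.mem_filter] at hgmem
        refine ⟨g, hgmem.1, fun j => ?_⟩
        induction j using Fin.lastCases with
        | last => exact le_trans hgmem.2 (min_le_left _ _)
        | cast i => exact hle i
    have factB : ∀ (lam : Fin (m+1) → ℕ) (c : ℕ) (p : (Fin m → ℕ) × Finset (Fin m)),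
        lam ∈ Piece (lift c p).1 (lift c p).2 ↔
          (Fin.init lam ∈ Piece p.1 p.2 ∧ lam (Fin.last m) = c) := by
      intro lam c p
      simp only [hlift, mem_piece_iff]
      constructor
      · rintro ⟨h1, h2⟩
        have hlastnm : Fin.last m ∉ p.2.image Fin.castSucc := by
          simp only [Finset.mem_image, not_exists]
          intro i
          rintro ⟨hi, h⟩
          exact (Fin.castSucc_lt_last i).ne h
        refine ⟨⟨fun i => ?_, fun i hi => ?_⟩, ?_⟩
        · have h3 := h1 (Fin.castSucc i)
          rwa [Fin.snoc_castSucc] at h3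
        · have hcs : Fin.castSucc i ∉ p.2.image Fin.castSucc := by
            simp only [Finset.mem_image, not_exists]
            intro i'
            rintro ⟨hi', h⟩
            exact hi ((Fin.castSucc_injective m h) ▸ hi')
          have h3 := h2 _ hcs
          rwa [Fin.snoc_castSucc] at h3
        · have h3 := h2 _ hlastnm
          rwa [Fin.snoc_last] at h3
      · rintro ⟨⟨h1, h2⟩, h3⟩
        constructor
        · intro j
          induction j using Fin.lastCases with
          | last => rw [Fin.snoc_last, h3]
          | cast i =>
            rw [Fin.snoc_castSucc]
            exact h1 i
        · intro j hj
          induction j using Fin.lastCases with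
          | last => rw [Fin.snoc_last, h3]
          | cast i =>
            rw [Fin.snoc_castSucc]
            refine h2 i ?_
            intro hmem
            exact hj (Finset.mem_image_of_mem _ hmem)
    have factC : ∀ (lam : Fin (m+1) → ℕ) (p : (Fin m → ℕ) × Finset (Fin m)),
        lam ∈ Piece (liftTop p).1 (liftTop p).2 ↔
          (Fin.init lam ∈ Piece p.1 p.2 ∧ C ≤ lam (Fin.last m)) := by
      intro lam p
      simp only [hliftTop, mem_piece_iff]
      constructor
      · rintro ⟨h1, h2⟩
        refine ⟨⟨fun i => ?_, fun i hi => ?_⟩, ?_⟩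
        · have h3 := h1 (Fin.castSucc i)
          rwa [Fin.snoc_castSucc] at h3
        · have hcs : Fin.castSucc i ∉ insert (Fin.last m) (p.2.image Fin.castSucc) := by
            simp only [Finset.mem_insert, Finset.mem_image, not_or, not_exists]
            refine ⟨(Fin.castSucc_lt_last i).ne, ?_⟩
            intro i'
            rintro ⟨hi', h⟩
            exact hi ((Fin.castSucc_injective m h) ▸ hi')
          have h3 := h2 _ hcs
          rwa [Fin.snoc_castSucc] at h3
        · have h3 := h1 (Fin.last m)
          rwa [Fin.snoc_last] at h3
      · rintro ⟨⟨h1, h2⟩, h3⟩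
        constructor
        · intro j
          induction j using Fin.lastCases with
          | last => rw [Fin.snoc_last]; exact h3
          | cast i =>
            rw [Fin.snoc_castSucc]
            exact h1 i
        · intro j hj
          induction j using Fin.lastCases with
          | last =>
            exact absurd (Finset.mem_insert_self _ _) hj
          | cast i =>
            rw [Fin.snoc_castSucc]
            refine h2 i ?_
            intro hmem
            exact hj (Finset.mem_insert_of_mem (Finset.mem_image_of_mem _ hmem))
    refine ⟨((Finset.range C).biUnion (fun c => (Pf c).image (lift c))) ∪ (Pf C).image liftTop,
      ?_, ?_⟩
    · -- covering
      intro lam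
      set c0 := lam (Fin.last m) with hc0
      set cs := min c0 C with hcs
      have h1 : (∀ g ∈ G, ¬ g ≤ lam) ↔ (∀ g' ∈ Gc cs, ¬ g' ≤ Fin.init lam) := by
        constructor
        · intro h g' hg' hle
          obtain ⟨g, hgG, hgle⟩ := (factG lam).2 ⟨g', hg', hle⟩
          exact h g hgG hgle
        · intro h g hgG hgle
          obtain ⟨g', hg', hle⟩ := (factG lam).1 ⟨g, hgG, hgle⟩
          exact h g' hg' hle
      rw [h1, (hPf cs).1 (Fin.init lam)]
      constructor
      · rintro ⟨p, hp, hpc⟩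
        by_cases hlt : c0 < C
        · have hcc : cs = c0 := min_eq_left hlt.le
          refine ⟨lift c0 p, ?_, ?_⟩
          · apply Finset.mem_union_left
            rw [Finset.mem_biUnion]
            exact ⟨c0, Finset.mem_range.2 hlt, Finset.mem_image_of_mem _ (hcc ▸ hp)⟩
          · rw [factB]
            exact ⟨hpc, rfl⟩
        · have hge : C ≤ c0 := not_lt.1 hlt
          have hcc : cs = C := min_eq_right hge
          refine ⟨liftTop p, ?_, ?_⟩
          · exact Finset.mem_union_right _ (Finset.mem_image_of_mem _ (hcc ▸ hp))
          · rw [factC]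
            exact ⟨hpc, hge⟩
      · rintro ⟨q, hq, hqc⟩
        rcases Finset.mem_union.1 hq with hq1 | hq2
        · rw [Finset.mem_biUnion] at hq1
          obtain ⟨c, hcr, hq1⟩ := hq1
          obtain ⟨p, hp, rfl⟩ := Finset.mem_image.1 hq1
          rw [factB] at hqc
          have hcc : cs = c := by
            rw [hcs, hc0, hqc.2]
            exact min_eq_left (le_of_lt (Finset.mem_range.1 hcr))
          exact ⟨p, hcc ▸ hp, hqc.1⟩
        · obtain ⟨p, hp, rfl⟩ := Finset.mem_image.1 hq2
          rw [factC] at hqc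
          have hcc : cs = C := min_eq_right hqc.2
          exact ⟨p, hcc ▸ hp, hqc.1⟩
    · -- disjointness
      intro p hp q hq lam hpl hql
      rcases Finset.mem_union.1 hp with hp1 | hp2
      · rw [Finset.mem_biUnion] at hp1
        obtain ⟨c1, hc1r, hp1⟩ := hp1
        obtain ⟨p', hp', rfl⟩ := Finset.mem_image.1 hp1
        rw [factB] at hpl
        rcases Finset.mem_union.1 hq with hq1 | hq2
        · rw [Finset.mem_biUnion] at hq1
          obtain ⟨c2, hc2r, hq1⟩ := hq1
          obtain ⟨q', hq', rfl⟩ := Finset.mem_image.1 hq1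
          rw [factB] at hql
          have hcc : c1 = c2 := by rw [← hpl.2, ← hql.2]
          subst hcc
          have := (hPf c1).2 p' hp' q' hq' (Fin.init lam) hpl.1 hql.1
          rw [this]
        · obtain ⟨q', hq', rfl⟩ := Finset.mem_image.1 hq2
          rw [factC] at hql
          have h4 : lam (Fin.last m) < C := by
            rw [hpl.2]
            exact Finset.mem_range.1 hc1r
          exact absurd hql.2 (not_le.2 h4)
      · obtain ⟨p', hp', rfl⟩ := Finset.mem_image.1 hp2
        rw [factC] at hpl
        rcases Finset.mem_union.1 hq with hq1 | hq2
        · rw [Finset.mem_biUnion] at hq1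
          obtain ⟨c2, hc2r, hq1⟩ := hq1
          obtain ⟨q', hq', rfl⟩ := Finset.mem_image.1 hq1
          rw [factB] at hql
          have h4 : lam (Fin.last m) < C := by
            rw [hql.2]
            exact Finset.mem_range.1 hc2r
          exact absurd hpl.2 (not_le.2 h4)
        · obtain ⟨q', hq', rfl⟩ := Finset.mem_image.1 hq2
          rw [factC] at hql
          have := (hPf C).2 p' hp' q' hq' (Fin.init lam) hpl.1 hql.1
          rw [this]
/-- The generating set: indicator functions of translated simplicial cones. -/
def ConeInd (d : ℕ) : Set ((Fin d → ℕ) → ℚ) :=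
  {g | ∃ (s : ℕ) (b0 : Fin d → ℕ) (v : Fin s → Fin d → ℕ),
    LinearIndependent ℚ (fun l : Fin s => fun j : Fin d => ((v l j : ℚ))) ∧
    g = (TransCone b0 v).indicator 1}

lemma extFun_restrict {m : ℕ} (S : Finset (Fin m)) (δ : Fin m → ℕ)
    (h : ∀ j ∉ S, δ j = 0) : extFun S (fun l => δ ((S.orderIsoOfFin rfl) l)) = δ := by
  funext i
  by_cases hi : i ∈ S
  · simp only [extFun, dif_pos hi]
    congr 1
    exact congrArg Subtype.val (OrderIso.apply_symm_apply (S.orderIsoOfFin rfl) ⟨i, hi⟩)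
  · rw [extFun_apply_not_mem _ _ _ hi, h i hi]

lemma sg_ind_mem_span_of_nonzero {d m : ℕ} (z : Fin m → Fin d → ℕ) (hz : ∀ i, z i ≠ 0) :
    (SgNV z).indicator (1 : (Fin d → ℕ) → ℚ) ∈ Submodule.span ℚ (ConeInd d) := by
  classical
  set U : Set (Fin m → ℕ) :=
    {lam | ∃ mu, piMap z mu = piMap z lam ∧ toLex mu < toLex lam} with hU
  have hUup : ∀ a ∈ U, ∀ δ : Fin m → ℕ, a + δ ∈ U := by
    rintro a ⟨mu, hmu, hlt⟩ δ
    exact ⟨mu + δ, by rw [piMap_add, piMap_add, hmu], lex_lt_add δ hlt⟩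
  obtain ⟨G, hG⟩ := upset_fg U hUup
  obtain ⟨P, hPcov, hPdis⟩ := stanley m G
  have hLiff : ∀ lam, (∃ p ∈ P, lam ∈ Piece p.1 p.2) ↔ lam ∉ U := by
    intro lam
    rw [← hPcov lam]
    constructor
    · intro h hU'
      obtain ⟨g, hg, hgle⟩ := (hG lam).1 hU'
      exact h g hg hgle
    · intro h g hg hgle
      exact h ((hG lam).2 ⟨g, hg, hgle⟩)
  have huniq : ∀ lam1 lam2, lam1 ∉ U → lam2 ∉ U →
      piMap z lam1 = piMap z lam2 → lam1 = lam2 := by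
    intro lam1 lam2 h1 h2 heq
    by_contra hne
    have hne' : toLex lam1 ≠ toLex lam2 := fun h => hne (toLex.injective h)
    rcases lt_or_gt_of_ne hne' with h | h
    · exact h2 ⟨lam1, heq, h⟩
    · exact h1 ⟨lam2, heq.symm, h⟩
  have hexists : ∀ b ∈ SgNV z, ∃ lam, piMap z lam = b ∧ lam ∉ U := by
    intro b hb
    obtain ⟨lam0, hlam0⟩ := hb
    have hFbfin : ({mu : Lex (Fin m → ℕ) | piMap z (ofLex mu) = b}).Finite := by
      have h2 : ({mu : Lex (Fin m → ℕ) | piMap z (ofLex mu) = b})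
          = ⇑toLex '' {lam : Fin m → ℕ | piMap z lam = b} := by
        ext mu
        simp only [Set.mem_image, Set.mem_setOf_eq]
        constructor
        · intro h
          exact ⟨ofLex mu, h, rfl⟩
        · rintro ⟨lam, hlam, rfl⟩
          exact hlam
      rw [h2]
      exact (fiber_finite z hz b).image _
    have hne : hFbfin.toFinset.Nonempty :=
      ⟨toLex lam0, by rw [Set.Finite.mem_toFinset]; exact hlam0⟩
    set lamS := hFbfin.toFinset.min' hne with hlamS
    have hmem : piMap z (ofLex lamS) = b := by
      have h3 := hFbfin.toFinset.min'_mem hne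
      rwa [Set.Finite.mem_toFinset] at h3
    refine ⟨ofLex lamS, hmem, ?_⟩
    rintro ⟨mu, hmu, hlt⟩
    have h4 : toLex mu ∈ hFbfin.toFinset := by
      rw [Set.Finite.mem_toFinset]
      show piMap z mu = b
      rw [hmu]
      exact hmem
    exact absurd (hFbfin.toFinset.min'_le _ h4) (not_le.2 hlt)
  have hpL : ∀ p ∈ P, ∀ lam ∈ Piece p.1 p.2, lam ∉ U :=
    fun p hp lam hl => (hLiff lam).1 ⟨p, hp, hl⟩
  -- image of a piece is the translated cone
  have himg : ∀ p ∈ P, ∀ b : Fin d → ℕ,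
      b ∈ TransCone (piMap z p.1) (fun l => z ((p.2.orderIsoOfFin rfl) l)) ↔
        ∃ lam ∈ Piece p.1 p.2, piMap z lam = b := by
    intro p _ b
    constructor
    · rintro ⟨lamc, hlamc⟩
      refine ⟨p.1 + extFun p.2 lamc, ⟨?_, ?_⟩, ?_⟩
      · intro i
        exact Nat.le_add_right _ _
      · intro j hj
        show p.1 j + extFun p.2 lamc j = p.1 j
        rw [extFun_apply_not_mem _ _ _ hj]
        exact Nat.add_zero _
      · show piMap z (p.1 + extFun p.2 lamc) = b
        rw [piMap_add, piMap_extFun]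
        exact hlamc
    · rintro ⟨lam, ⟨hle, hsupp⟩, heq⟩
      obtain ⟨δ, hδ⟩ := le_exists_add hle
      have hδ0 : ∀ j ∉ p.2, δ j = 0 := by
        intro j hj
        have h5 := congrFun hδ j
        simp only [Pi.add_apply] at h5
        have h6 := hsupp j hj
        show δ j = 0
        omega
      refine ⟨fun l => δ ((p.2.orderIsoOfFin rfl) l), ?_⟩
      have h7 : piMap z (extFun p.2 (fun l => δ ((p.2.orderIsoOfFin rfl) l))) = piMap z δ := by
        rw [extFun_restrict p.2 δ hδ0]
      rw [← heq, hδ, piMap_add]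
      congr 1
      rw [← h7, piMap_extFun]
  -- linear independence of the cone generators
  have hlin : ∀ p ∈ P, LinearIndependent ℚ
      (fun l : Fin p.2.card => fun j : Fin d => ((z ((p.2.orderIsoOfFin rfl) l) j : ℚ))) := by
    intro p hp
    by_contra hnl
    rw [Fintype.not_linearIndependent_iff] at hnl
    obtain ⟨g, hsum, l0, hl0⟩ := hnl
    set N : ℕ := ∏ l, (g l).den with hN
    have hNpos : 0 < N := Finset.prod_pos (fun l _ => (g l).pos)
    set c : Fin p.2.card → ℤ := fun l => (g l).num * ((N / (g l).den : ℕ) : ℤ) with hc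
    have hcval : ∀ l, ((c l : ℚ)) = g l * (N : ℚ) := by
      intro l
      have hdvd : (g l).den ∣ N := Finset.dvd_prod_of_mem _ (Finset.mem_univ l)
      have hden : ((g l).den : ℚ) ≠ 0 := Nat.cast_ne_zero.2 (g l).den_nz
      have step1 : ((c l : ℚ)) = ((g l).num : ℚ) * ((N / (g l).den : ℕ) : ℚ) := by
        show ((((g l).num * ((N / (g l).den : ℕ) : ℤ)) : ℤ) : ℚ) = _
        rw [Int.cast_mul, Int.cast_natCast]
      rw [step1, Nat.cast_div hdvd hden]
      field_simp
      rw [Rat.den_mul_eq_num]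
    set pp : Fin p.2.card → ℕ := fun l => (c l).toNat with hpp
    set nn : Fin p.2.card → ℕ := fun l => (-(c l)).toNat with hnn
    have hcl : ∀ l, (pp l : ℤ) - (nn l : ℤ) = c l := by
      intro l
      simp only [hpp, hnn]
      omega
    have hkey : ∑ l, pp l • z ((p.2.orderIsoOfFin rfl) l)
        = ∑ l, nn l • z ((p.2.orderIsoOfFin rfl) l) := by
      funext j
      have hq : (((∑ l, pp l • z ((p.2.orderIsoOfFin rfl) l)) j : ℕ) : ℚ)
          = (((∑ l, nn l • z ((p.2.orderIsoOfFin rfl) l)) j : ℕ) : ℚ) := by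
        have hs := congrFun hsum j
        simp only [Finset.sum_apply, Pi.smul_apply, Pi.zero_apply, smul_eq_mul] at hs ⊢
        push_cast
        have h8 : ∀ l : Fin p.2.card, ((pp l : ℚ) - (nn l : ℚ)) = (c l : ℚ) := by
          intro l
          have := hcl l
          push_cast [← this]
          ring
        have h9 : ∑ l, ((pp l : ℚ) * (z ((p.2.orderIsoOfFin rfl) l) j : ℚ))
            - ∑ l, ((nn l : ℚ) * (z ((p.2.orderIsoOfFin rfl) l) j : ℚ)) = 0 := by
          rw [← Finset.sum_sub_distrib]
          have h10 : ∀ l, (pp l : ℚ) * (z ((p.2.orderIsoOfFin rfl) l) j : ℚ)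
              - (nn l : ℚ) * (z ((p.2.orderIsoOfFin rfl) l) j : ℚ)
              = (N : ℚ) * (g l * (z ((p.2.orderIsoOfFin rfl) l) j : ℚ)) := by
            intro l
            rw [← sub_mul, h8, hcval]
            ring
          rw [Finset.sum_congr rfl (fun l _ => h10 l), ← Finset.mul_sum, hs, mul_zero]
        linarith
      exact_mod_cast hq
    have hP1 : p.1 + extFun p.2 pp ∈ Piece p.1 p.2 := by
      refine ⟨fun i => Nat.le_add_right _ _, fun j hj => ?_⟩
      show p.1 j + extFun p.2 pp j = p.1 j
      rw [extFun_apply_not_mem _ _ _ hj]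
      exact Nat.add_zero _
    have hP2 : p.1 + extFun p.2 nn ∈ Piece p.1 p.2 := by
      refine ⟨fun i => Nat.le_add_right _ _, fun j hj => ?_⟩
      show p.1 j + extFun p.2 nn j = p.1 j
      rw [extFun_apply_not_mem _ _ _ hj]
      exact Nat.add_zero _
    have heqpi : piMap z (p.1 + extFun p.2 pp) = piMap z (p.1 + extFun p.2 nn) := by
      rw [piMap_add, piMap_add, piMap_extFun, piMap_extFun, hkey]
    have heqlam := huniq _ _ (hpL p hp _ hP1) (hpL p hp _ hP2) heqpi
    have heqext : extFun p.2 pp = extFun p.2 nn := add_left_cancel heqlam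
    have hppnn : pp l0 = nn l0 := by
      have h11 := congrFun heqext ((p.2.orderIsoOfFin rfl) l0)
      rwa [extFun_apply_mem, extFun_apply_mem] at h11
    have hc0 : c l0 = 0 := by
      have := hcl l0
      omega
    have : g l0 * (N : ℚ) = 0 := by rw [← hcval l0, hc0]; norm_num
    rcases mul_eq_zero.1 this with h | h
    · exact hl0 h
    · exact absurd h (Nat.cast_ne_zero.2 hNpos.ne')
  -- the indicator identity
  have hfun : (SgNV z).indicator (1 : (Fin d → ℕ) → ℚ)
      = ∑ p ∈ P, (TransCone (piMap z p.1)
          (fun l => z ((p.2.orderIsoOfFin rfl) l))).indicator 1 := by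
    funext b
    rw [Finset.sum_apply]
    by_cases hb : b ∈ SgNV z
    · rw [Set.indicator_of_mem hb]
      obtain ⟨lamS, hlamSeq, hlamSU⟩ := hexists b hb
      obtain ⟨p0, hp0, hp0mem⟩ := (hLiff lamS).2 hlamSU
      have hmem0 : b ∈ TransCone (piMap z p0.1) (fun l => z ((p0.2.orderIsoOfFin rfl) l)) :=
        (himg p0 hp0 b).2 ⟨lamS, hp0mem, hlamSeq⟩
      have hsingle : ∑ p ∈ P, (TransCone (piMap z p.1)
          (fun l => z ((p.2.orderIsoOfFin rfl) l))).indicator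
            (1 : (Fin d → ℕ) → ℚ) b
          = (TransCone (piMap z p0.1)
          (fun l => z ((p0.2.orderIsoOfFin rfl) l))).indicator (1 : (Fin d → ℕ) → ℚ) b := by
        refine Finset.sum_eq_single_of_mem p0 hp0 ?_
        intro q hq hqne
        apply Set.indicator_of_notMem
        intro hbq
        obtain ⟨lam, hlamP, hlameq⟩ := (himg q hq b).1 hbq
        have h12 : lam = lamS :=
          huniq _ _ (hpL q hq _ hlamP) hlamSU (by rw [hlameq, hlamSeq])
        rw [h12] at hlamP
        exact hqne (hPdis q hq p0 hp0 lamS hlamP hp0mem)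
      rw [hsingle, Set.indicator_of_mem hmem0]
    · rw [Set.indicator_of_notMem hb]
      symm
      apply Finset.sum_eq_zero
      intro q hq
      apply Set.indicator_of_notMem
      intro hbq
      obtain ⟨lam, _, hlameq⟩ := (himg q hq b).1 hbq
      exact hb ⟨lam, hlameq⟩
  rw [hfun]
  apply Submodule.sum_mem
  intro p hp
  apply Submodule.subset_span
  exact ⟨p.2.card, piMap z p.1, fun l => z ((p.2.orderIsoOfFin rfl) l), hlin p hp, rfl⟩

def IsSgSet {d : ℕ} (W : Set (Fin d → ℕ)) : Prop :=
  ∃ (m : ℕ) (z : Fin m → Fin d → ℕ), W = SgNV z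

lemma SgNV_eq_nonzero {m d : ℕ} (z : Fin m → Fin d → ℕ) :
    ∃ (m' : ℕ) (z' : Fin m' → Fin d → ℕ), (∀ i, z' i ≠ 0) ∧ SgNV z = SgNV z' := by
  classical
  set T := Finset.univ.filter (fun i => z i ≠ 0) with hT
  refine ⟨T.card, fun l => z ((T.orderIsoOfFin rfl) l), fun l => ?_, ?_⟩
  · exact (Finset.mem_filter.1 ((T.orderIsoOfFin rfl) l).2).2
  · ext b
    constructor
    · rintro ⟨lam, hlam⟩
      refine ⟨fun l => lam ((T.orderIsoOfFin rfl) l), ?_⟩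
      show ∑ l, lam ((T.orderIsoOfFin rfl) l) • z ((T.orderIsoOfFin rfl) l) = b
      rw [sum_reindex T (fun i => lam i • z i)]
      rw [← hlam]
      apply Finset.sum_subset (Finset.subset_univ T)
      intro i _ hi
      rw [hT, Finset.mem_filter] at hi
      push_neg at hi
      have h2 : z i = 0 := hi (Finset.mem_univ i)
      rw [h2, smul_zero]
    · rintro ⟨lam', hlam⟩
      refine ⟨extFun T lam', ?_⟩
      show piMap z (extFun T lam') = b
      rw [piMap_extFun]
      exact hlam

lemma isSgSet_ind_mem_span {d : ℕ} {W : Set (Fin d → ℕ)} (h : IsSgSet W) :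
    W.indicator (1 : (Fin d → ℕ) → ℚ) ∈ Submodule.span ℚ (ConeInd d) := by
  obtain ⟨m, z, rfl⟩ := h
  obtain ⟨m', z', hz', heq⟩ := SgNV_eq_nonzero z
  rw [heq]
  exact sg_ind_mem_span_of_nonzero z' hz'
/-- Gordan's lemma: the solution monoid of a homogeneous system is finitely generated. -/
lemma gordan {N d : ℕ} (v w : Fin N → Fin d → ℕ) :
    ∃ (r : ℕ) (h : Fin r → Fin N → ℕ),
      (∀ j, piMap v (h j) = piMap w (h j)) ∧
      (∀ lam, piMap v lam = piMap w lam ↔ ∃ c : Fin r → ℕ, ∑ j, c j • h j = lam) := by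
  classical
  set M : Set (Fin N → ℕ) := {lam | piMap v lam = piMap w lam} with hM
  set Mn : Set (Fin N → ℕ) := {a | a ∈ M ∧ a ≠ 0 ∧ ∀ b ∈ M, b ≠ 0 → b ≤ a → b = a} with hMn
  have hanti : IsAntichain (· ≤ ·) Mn :=
    fun a ha b hb hne hab => hne (hb.2.2 a ha.1 ha.2.1 hab)
  have hfin : Mn.Finite := by
    haveI hw : ∀ i : Fin N, IsWellOrder ℕ (· < ·) := fun _ => inferInstance
    exact hanti.finite_of_partiallyWellOrderedOn
      (Set.isPWO_of_wellQuasiOrderedLE Mn)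
  set r := hfin.toFinset.card with hr
  set e := hfin.toFinset.equivFin with he
  set h : Fin r → Fin N → ℕ := fun j => (e.symm j : Fin N → ℕ) with hh
  have hjM : ∀ j, h j ∈ M := by
    intro j
    have h2 := (e.symm j).2
    rw [Set.Finite.mem_toFinset] at h2
    exact h2.1
  refine ⟨r, h, fun j => hjM j, fun lam => ⟨?_, ?_⟩⟩
  · -- M ⊆ generated
    intro hlam
    -- strong induction on total weight
    have key : ∀ (n : ℕ) (mu : Fin N → ℕ), mu ∈ M → (∑ i, mu i) ≤ n →
        ∃ c : Fin r → ℕ, ∑ j, c j • h j = mu := by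
      intro n
      induction n with
      | zero =>
        intro mu hmu hle
        have hmu0 : mu = 0 := by
          funext i
          have h3 : mu i ≤ ∑ i', mu i' :=
            Finset.single_le_sum (f := fun i' => mu i') (fun _ _ => Nat.zero_le _)
              (Finset.mem_univ i)
          have : mu i = 0 := by omega
          exact this
        exact ⟨0, by simp [hmu0]⟩
      | succ n ihn =>
        intro mu hmu hle
        by_cases hmu0 : mu = 0
        · exact ⟨0, by simp [hmu0]⟩
        · -- find a minimal nonzero element below mu
          set T : Set (Fin N → ℕ) := {b | b ∈ M ∧ b ≠ 0 ∧ b ≤ mu} with hT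
          have hTfin : T.Finite := (Set.finite_Iic mu).subset (fun b hb => hb.2.2)
          obtain ⟨g, hgle, hgmin⟩ :=
            hTfin.isPWO.exists_le_minimal (⟨hmu, hmu0, le_refl mu⟩ : mu ∈ T)
          have hgMn : g ∈ Mn := by
            refine ⟨hgmin.1.1, hgmin.1.2.1, fun b hb hb0 hble => ?_⟩
            have hbT : b ∈ T := ⟨hb, hb0, le_trans hble hgle⟩
            exact le_antisymm hble (hgmin.2 hbT hble)
          obtain ⟨j0, hj0⟩ : ∃ j0, h j0 = g := by
            refine ⟨e ⟨g, ?_⟩, ?_⟩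
            · rw [Set.Finite.mem_toFinset]; exact hgMn
            · rw [hh]
              simp
          -- subtract
          obtain ⟨δ, hδ⟩ := le_exists_add (hgmin.1.2.2 : g ≤ mu)
          have hδM : δ ∈ M := by
            have h4 : piMap v g + piMap v δ = piMap w g + piMap w δ := by
              rw [← piMap_add, ← piMap_add, ← hδ]
              exact hmu
            have h5 := hgMn.1
            rw [hM, Set.mem_setOf_eq] at h5
            rw [hM, Set.mem_setOf_eq]
            have := h4
            rw [h5] at this
            exact add_left_cancel this
          have hgsum : 1 ≤ ∑ i, g i := by
            by_contra hcon
            push_neg at hcon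
            have : ∀ i, g i = 0 := by
              intro i
              have h6 : g i ≤ ∑ i', g i' :=
                Finset.single_le_sum (f := fun i' => g i') (fun _ _ => Nat.zero_le _)
                  (Finset.mem_univ i)
              omega
            exact hgMn.2.1 (funext this)
          have hδle : (∑ i, δ i) ≤ n := by
            have h7 : ∑ i, mu i = ∑ i, g i + ∑ i, δ i := by
              rw [hδ, ← Finset.sum_add_distrib]
              exact Finset.sum_congr rfl fun i _ => rfl
            omega
          obtain ⟨c', hc'⟩ := ihn δ hδM hδle
          refine ⟨fun j => c' j + (if j = j0 then 1 else 0), ?_⟩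
          have h8 : ∑ j, (c' j + (if j = j0 then 1 else 0)) • h j
              = ∑ j, c' j • h j + ∑ j, (if j = j0 then 1 else 0) • h j := by
            rw [← Finset.sum_add_distrib]
            refine Finset.sum_congr rfl fun j _ => ?_
            rw [add_smul]
          rw [h8, hc']
          have h9 : ∑ j, (if j = j0 then 1 else 0) • h j = h j0 := by
            rw [Finset.sum_eq_single_of_mem j0 (Finset.mem_univ j0)]
            · simp
            · intro j _ hjne
              simp [hjne]
          rw [h9, hj0, hδ]
          exact add_comm δ g ▸ rfl
    exact key (∑ i, lam i) lam hlam (le_refl _)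
  · rintro ⟨c, rfl⟩
    show piMap v _ = piMap w _
    rw [piMap_sum, piMap_sum]
    refine Finset.sum_congr rfl fun j _ => ?_
    rw [hjM j]

/-- Intersections of finitely generated subsemigroups are finitely generated. -/
lemma IsSgSet.inter {d : ℕ} {W1 W2 : Set (Fin d → ℕ)} (h1 : IsSgSet W1) (h2 : IsSgSet W2) :
    IsSgSet (W1 ∩ W2) := by
  classical
  obtain ⟨m1, z1, rfl⟩ := h1
  obtain ⟨m2, z2, rfl⟩ := h2
  set v : Fin (m1 + m2) → Fin d → ℕ := Fin.addCases z1 (fun _ => 0) with hv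
  set w : Fin (m1 + m2) → Fin d → ℕ := Fin.addCases (fun _ => 0) z2 with hw
  have hpiv : ∀ lam : Fin (m1 + m2) → ℕ,
      piMap v lam = ∑ i : Fin m1, lam (Fin.castAdd m2 i) • z1 i := by
    intro lam
    rw [piMap, Fin.sum_univ_add]
    have hz : ∀ i : Fin m2, lam (Fin.natAdd m1 i) • v (Fin.natAdd m1 i) = 0 := by
      intro i
      simp [hv]
    rw [Finset.sum_congr rfl (fun i _ => hz i)]
    simp only [Finset.sum_const_zero, add_zero]
    refine Finset.sum_congr rfl fun i _ => ?_
    simp [hv]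
  have hpiw : ∀ lam : Fin (m1 + m2) → ℕ,
      piMap w lam = ∑ i : Fin m2, lam (Fin.natAdd m1 i) • z2 i := by
    intro lam
    rw [piMap, Fin.sum_univ_add]
    have hz : ∀ i : Fin m1, lam (Fin.castAdd m2 i) • w (Fin.castAdd m2 i) = 0 := by
      intro i
      simp [hw]
    rw [Finset.sum_congr rfl (fun i _ => hz i)]
    simp only [Finset.sum_const_zero, zero_add]
    refine Finset.sum_congr rfl fun i _ => ?_
    simp [hw]
  obtain ⟨r, h, hhM, hiff⟩ := gordan v w
  refine ⟨r, fun j => piMap v (h j), ?_⟩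
  ext b
  constructor
  · rintro ⟨⟨lam1, hlam1⟩, ⟨lam2, hlam2⟩⟩
    set lam : Fin (m1 + m2) → ℕ := Fin.addCases lam1 lam2 with hlam
    have hveq : piMap v lam = b := by
      rw [hpiv]
      rw [← hlam1]
      refine Finset.sum_congr rfl fun i _ => ?_
      simp [hlam]
    have hweq : piMap w lam = b := by
      rw [hpiw]
      rw [← hlam2]
      refine Finset.sum_congr rfl fun i _ => ?_
      simp [hlam]
    obtain ⟨c, hc⟩ := (hiff lam).1 (by rw [hveq, hweq])
    refine ⟨c, ?_⟩
    show ∑ j, c j • piMap v (h j) = b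
    rw [← piMap_sum, hc, hveq]
  · rintro ⟨c, hc⟩
    have hcv : piMap v (∑ j, c j • h j) = b := by
      rw [piMap_sum]
      exact hc
    have hM : piMap v (∑ j, c j • h j) = piMap w (∑ j, c j • h j) :=
      (hiff _).2 ⟨c, rfl⟩
    constructor
    · exact ⟨fun i => (∑ j, c j • h j) (Fin.castAdd m2 i), by rw [← hpiv]; exact hcv⟩
    · exact ⟨fun i => (∑ j, c j • h j) (Fin.natAdd m1 i), by rw [← hpiw, ← hM]; exact hcv⟩
lemma union_ind_mem_span {d : ℕ} : ∀ (n : ℕ) (W : Fin n → Set (Fin d → ℕ)),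
    (∀ i, IsSgSet (W i)) →
    (⋃ i, W i).indicator (1 : (Fin d → ℕ) → ℚ) ∈ Submodule.span ℚ (ConeInd d) := by
  intro n
  induction n with
  | zero =>
    intro W _
    have h0 : (⋃ i : Fin 0, W i) = ∅ := by
      apply Set.eq_empty_of_forall_notMem
      intro b hb
      obtain ⟨i, -⟩ := Set.mem_iUnion.1 hb
      exact i.elim0
    rw [h0, Set.indicator_empty]
    exact Submodule.zero_mem _
  | succ n ih =>
    intro W hW
    have hRspan := ih (fun i => W i.succ) (fun i => hW i.succ)
    have hIspan := ih (fun i => W 0 ∩ W i.succ) (fun i => (hW 0).inter (hW i.succ))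
    have hAspan := isSgSet_ind_mem_span (hW 0)
    have hfun : (⋃ i, W i).indicator (1 : (Fin d → ℕ) → ℚ)
        = (W 0).indicator 1 + (⋃ i : Fin n, W i.succ).indicator 1
          - (⋃ i : Fin n, (W 0 ∩ W i.succ)).indicator 1 := by
      funext b
      have hmem : b ∈ (⋃ i, W i) ↔ b ∈ W 0 ∨ b ∈ ⋃ i : Fin n, W i.succ := by
        simp only [Set.mem_iUnion]
        constructor
        · rintro ⟨i, hi⟩
          rcases Fin.eq_zero_or_eq_succ i with h | ⟨j, rfl⟩
          · exact Or.inl (h ▸ hi)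
          · exact Or.inr ⟨j, hi⟩
        · rintro (h | ⟨j, hj⟩)
          · exact ⟨0, h⟩
          · exact ⟨j.succ, hj⟩
      have hImem : b ∈ (⋃ i : Fin n, (W 0 ∩ W i.succ)) ↔
          b ∈ W 0 ∧ b ∈ ⋃ i : Fin n, W i.succ := by
        simp only [Set.mem_iUnion, Set.mem_inter_iff]
        constructor
        · rintro ⟨i, h1, h2⟩
          exact ⟨h1, i, h2⟩
        · rintro ⟨h1, i, h2⟩
          exact ⟨i, h1, h2⟩
      simp only [Pi.sub_apply, Pi.add_apply, Set.indicator_apply]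
      by_cases hA : b ∈ W 0 <;> by_cases hR : b ∈ ⋃ i : Fin n, W i.succ <;>
        simp [hA, hR, hmem, hImem]
    rw [hfun]
    exact Submodule.sub_mem _ (Submodule.add_mem _ hAspan hRspan) hIspan

/-- The subsemigroup generated by the vectors indexed by `S`. -/
def SgS {d t : ℕ} (x : Fin t → Fin d → ℕ) (S : Finset (Fin t)) : Set (Fin d → ℕ) :=
  {b | ∃ lam : Fin t → ℕ, (∀ i ∉ S, lam i = 0) ∧ piMap x lam = b}

lemma isSgSet_SgS {d t : ℕ} (x : Fin t → Fin d → ℕ) (S : Finset (Fin t)) :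
    IsSgSet (SgS x S) := by
  refine ⟨S.card, fun l => x ((S.orderIsoOfFin rfl) l), ?_⟩
  ext b
  constructor
  · rintro ⟨lam, hsupp, heq⟩
    refine ⟨fun l => lam ((S.orderIsoOfFin rfl) l), ?_⟩
    show ∑ l, lam ((S.orderIsoOfFin rfl) l) • x ((S.orderIsoOfFin rfl) l) = b
    rw [sum_reindex S (fun i => lam i • x i), ← heq]
    apply Finset.sum_subset (Finset.subset_univ S)
    intro i _ hi
    rw [hsupp i hi, zero_smul]
  · rintro ⟨lam', heq⟩
    refine ⟨extFun S lam', fun i hi => extFun_apply_not_mem _ _ _ hi, ?_⟩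
    rw [piMap_extFun]
    exact heq

lemma SgS_subset {d t : ℕ} (x : Fin t → Fin d → ℕ) (S : Finset (Fin t)) :
    SgS x S ⊆ SgNV x := fun b ⟨lam, _, heq⟩ => ⟨lam, heq⟩

lemma m0_le_iff {d t : ℕ} (x : Fin t → Fin d → ℕ) (b : Fin d → ℕ) (hb : b ∈ SgNV x) (n : ℕ) :
    m0NV x b ≤ n ↔ ∃ S : Finset (Fin t), S.card ≤ n ∧ b ∈ SgS x S := by
  classical
  obtain ⟨lam0, hlam0⟩ := hb
  have hne : {k | ∃ lam : Fin t → ℕ, (∑ i, lam i • x i = b) ∧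
      k = (Finset.univ.filter fun i => lam i ≠ 0).card}.Nonempty :=
    ⟨_, lam0, hlam0, rfl⟩
  constructor
  · intro hle
    have hmem := Nat.sInf_mem hne
    obtain ⟨lam, heq, hk⟩ := hmem
    refine ⟨Finset.univ.filter (fun i => lam i ≠ 0), ?_, lam, ?_, heq⟩
    · rw [← hk]
      exact hle
    · intro i hi
      rw [Finset.mem_filter] at hi
      push_neg at hi
      exact hi (Finset.mem_univ i)
  · rintro ⟨S, hcard, lam, hsupp, heq⟩
    have hsub : Finset.univ.filter (fun i => lam i ≠ 0) ⊆ S := by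
      intro i hi
      rw [Finset.mem_filter] at hi
      by_contra hc
      exact hi.2 (hsupp i hc)
    have h1 : m0NV x b ≤ (Finset.univ.filter fun i => lam i ≠ 0).card :=
      Nat.sInf_le ⟨lam, heq, rfl⟩
    exact le_trans h1 (le_trans (Finset.card_le_card hsub) hcard)

lemma m0_le_t {d t : ℕ} (x : Fin t → Fin d → ℕ) (b : Fin d → ℕ) (hb : b ∈ SgNV x) :
    m0NV x b ≤ t := by
  classical
  obtain ⟨lam0, hlam0⟩ := hb
  have h1 : m0NV x b ≤ (Finset.univ.filter fun i => lam0 i ≠ 0).card :=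
    Nat.sInf_le ⟨lam0, hlam0, rfl⟩
  refine le_trans h1 (le_trans (Finset.card_filter_le _ _) ?_)
  rw [Finset.card_univ, Fintype.card_fin]

lemma Bn_ind_mem_span {d t : ℕ} (x : Fin t → Fin d → ℕ) (n : ℕ) :
    ({b | ∃ S : Finset (Fin t), S.card ≤ n ∧ b ∈ SgS x S}).indicator
      (1 : (Fin d → ℕ) → ℚ) ∈ Submodule.span ℚ (ConeInd d) := by
  classical
  set F : Finset (Finset (Fin t)) := Finset.univ.filter (fun S => S.card ≤ n) with hF
  have hUeq : {b | ∃ S : Finset (Fin t), S.card ≤ n ∧ b ∈ SgS x S}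
      = ⋃ i : Fin F.card, SgS x ((F.equivFin.symm i) : Finset (Fin t)) := by
    ext b
    simp only [Set.mem_setOf_eq, Set.mem_iUnion]
    constructor
    · rintro ⟨S, hcard, hbS⟩
      have hSF : S ∈ F := Finset.mem_filter.2 ⟨Finset.mem_univ S, hcard⟩
      refine ⟨F.equivFin ⟨S, hSF⟩, ?_⟩
      rw [Equiv.symm_apply_apply]
      exact hbS
    · rintro ⟨i, hi⟩
      refine ⟨(F.equivFin.symm i : Finset (Fin t)), ?_, hi⟩
      have h2 := (F.equivFin.symm i).2
      exact (Finset.mem_filter.1 h2).2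
  rw [hUeq]
  exact union_ind_mem_span F.card _ (fun i => isSgSet_SgS x _)
/-- **Theorem 3.** For any finite set of nonzero non-negative integer vectors
`X ⊂ ℤ^d`, the function `m₀ : Sg(X) → ℤ_{≥0}` is eventually quasiconstant:
extended by `0` outside `Sg(X)`, it is a finite sum of functions, each of which
vanishes outside a translated cone (generated by linearly independent vectors)
and is constant on that cone. -/
theorem m0_eventually_quasiconstant {d t : ℕ} (x : Fin t → Fin d → ℕ)
    (hinj : Function.Injective x) (hnz : ∀ i, x i ≠ 0) :
    ∃ (k : ℕ) (s : Fin k → ℕ) (b0 : Fin k → Fin d → ℕ)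
      (v : (i : Fin k) → Fin (s i) → Fin d → ℕ) (cst : Fin k → ℚ),
      (∀ i, LinearIndependent ℚ (fun l : Fin (s i) => fun j : Fin d => ((v i l j : ℚ)))) ∧
      ∀ b : Fin d → ℕ,
        (SgNV x).indicator (fun b' => (m0NV x b' : ℚ)) b =
          ∑ i, (TransCone (b0 i) (v i)).indicator (fun _ => cst i) b := by
  classical
  set Un : ℕ → Set (Fin d → ℕ) :=
    fun n => {b | ∃ S : Finset (Fin t), S.card ≤ n ∧ b ∈ SgS x S} with hUn
  have hfun : (SgNV x).indicator (fun b' => (m0NV x b' : ℚ))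
      = ∑ n ∈ Finset.range t,
          ((SgNV x).indicator (1 : (Fin d → ℕ) → ℚ) - (Un n).indicator 1) := by
    funext b
    rw [Finset.sum_apply]
    by_cases hb : b ∈ SgNV x
    · rw [Set.indicator_of_mem hb]
      simp only [Pi.sub_apply]
      have hterm : ∀ n, (SgNV x).indicator (1 : (Fin d → ℕ) → ℚ) b
            - (Un n).indicator (1 : (Fin d → ℕ) → ℚ) b
          = if m0NV x b ≤ n then 0 else 1 := by
        intro n
        rw [Set.indicator_of_mem hb]
        by_cases hm : m0NV x b ≤ n
        · have hbU : b ∈ Un n := (m0_le_iff x b hb n).1 hm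
          rw [Set.indicator_of_mem hbU, if_pos hm]
          show (1 : ℚ) - 1 = 0
          norm_num
        · have hbU : b ∉ Un n := fun hc => hm ((m0_le_iff x b hb n).2 hc)
          rw [Set.indicator_of_notMem hbU, if_neg hm]
          show (1 : ℚ) - 0 = 1
          norm_num
      rw [Finset.sum_congr rfl (fun n _ => hterm n)]
      have hswap : ∀ n, (if m0NV x b ≤ n then (0:ℚ) else 1)
          = (if ¬ m0NV x b ≤ n then (1:ℚ) else 0) := by
        intro n
        by_cases h : m0NV x b ≤ n <;> simp [h]
      rw [Finset.sum_congr rfl (fun n _ => hswap n), Finset.sum_boole]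
      have hfilter : (Finset.range t).filter (fun n => ¬ m0NV x b ≤ n)
          = Finset.range (m0NV x b) := by
        ext j
        simp only [Finset.mem_filter, Finset.mem_range, not_le]
        have := m0_le_t x b hb
        omega
      rw [hfilter, Finset.card_range]
    · rw [Set.indicator_of_notMem hb]
      symm
      apply Finset.sum_eq_zero
      intro n _
      rw [Pi.sub_apply, Set.indicator_of_notMem hb]

      have hbU : b ∉ Un n := by
        rintro ⟨S, -, hbS⟩
        exact hb (SgS_subset x S hbS)
      rw [Set.indicator_of_notMem hbU]
      norm_num
  have hspan : (SgNV x).indicator (fun b' => (m0NV x b' : ℚ))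
      ∈ Submodule.span ℚ (ConeInd d) := by
    rw [hfun]
    apply Submodule.sum_mem
    intro n _
    apply Submodule.sub_mem
    · exact isSgSet_ind_mem_span ⟨t, x, rfl⟩
    · exact Bn_ind_mem_span x n
  rw [Submodule.mem_span_set'] at hspan
  obtain ⟨k, f, gf, hsum⟩ := hspan
  choose s b0 v hlin hg using fun i => (gf i).2
  refine ⟨k, s, b0, v, f, hlin, ?_⟩
  intro b
  have hb := congrFun hsum b
  rw [Finset.sum_apply] at hb
  rw [← hb]
  refine Finset.sum_congr rfl fun i _ => ?_
  rw [Pi.smul_apply, hg i]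
  by_cases hbT : b ∈ TransCone (b0 i) (v i)
  · rw [Set.indicator_of_mem hbT, Set.indicator_of_mem hbT]
    show f i • (1 : ℚ) = f i
    rw [smul_eq_mul, mul_one]
  · rw [Set.indicator_of_notMem hbT, Set.indicator_of_notMem hbT]
    rw [smul_zero]
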